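/- Let f, g, α be as in the standing assumptions. Then for every β with 0 < β ≤ α and every n ∈ ℕ, the n-th iterated image of the interval [β,1] under the set-valued map f ∪ g equals [g^n(β), 1]; in particular (f ∪ g)^n([α,1]) = [g^n(α), 1]. -/
import Mathlib


open Set

/-- The n-th Mahavier product of a relation `F` on `X`: tuples `(x 0, …, x n)`
with `(x i, x (i+1)) ∈ F` for all `i < n`. -/
def Mahavier {X : Type*} (F : Set (X × X)) (n : ℕ) : Set (Fin (n + 1) → X) :=
  {x | ∀ i : Fin n, (x i.castSucc, x i.succ) ∈ F}

/-- A witness of CR-turbulence at length parameter `n`. -/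
def CRWitness {X : Type*} [TopologicalSpace X] (F : Set (X × X)) (n : ℕ) : Prop :=
  ∃ K L : Set (Fin (n + 1) → X),
    K.Nonempty ∧ L.Nonempty ∧ IsClosed K ∧ IsClosed L ∧
    K ⊆ Mahavier F n ∧ L ⊆ Mahavier F n ∧ Disjoint K L ∧
    ((fun x => x 0) '' K ∪ (fun x => x 0) '' L) ⊆
      ((fun x => x (Fin.last n)) '' K ∩ (fun x => x (Fin.last n)) '' L)

/-- A witness of reverse CR-turbulence at length parameter `n`. -/
def RevCRWitness {X : Type*} [TopologicalSpace X] (F : Set (X × X)) (n : ℕ) : Prop :=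
  ∃ K L : Set (Fin (n + 1) → X),
    K.Nonempty ∧ L.Nonempty ∧ IsClosed K ∧ IsClosed L ∧
    K ⊆ Mahavier F n ∧ L ⊆ Mahavier F n ∧ Disjoint K L ∧
    ((fun x => x (Fin.last n)) '' K ∪ (fun x => x (Fin.last n)) '' L) ⊆
      ((fun x => x 0) '' K ∩ (fun x => x 0) '' L)

/-- `F` is CR-turbulent. -/
def CRTurbulent {X : Type*} [TopologicalSpace X] (F : Set (X × X)) : Prop :=
  ∃ n : ℕ, 1 ≤ n ∧ CRWitness F n

/-- `F` is reverse CR-turbulent. -/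
def RevCRTurbulent {X : Type*} [TopologicalSpace X] (F : Set (X × X)) : Prop :=
  ∃ n : ℕ, 1 ≤ n ∧ RevCRWitness F n

/-- A self-map is separated turbulent. -/
def SepTurbulent {Z : Type*} [TopologicalSpace Z] (h : Z → Z) : Prop :=
  ∃ K L : Set Z, K.Nonempty ∧ L.Nonempty ∧ IsClosed K ∧ IsClosed L ∧
    Disjoint K L ∧ K ∪ L ⊆ h '' K ∩ h '' L

/-- A self-map is turbulent. -/
def Turbulent {Z : Type*} [TopologicalSpace Z] (h : Z → Z) : Prop :=
  ∃ K L : Set Z, K.Nonempty ∧ L.Nonempty ∧ IsClosed K ∧ IsClosed L ∧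
    (K ∩ L).Subsingleton ∧ K ∪ L ⊆ h '' K ∩ h '' L

/-- The infinite Mahavier product `X_F^+`. -/
def MahavierSeq {X : Type*} (F : Set (X × X)) : Set (ℕ → X) :=
  {x | ∀ i : ℕ, (x i, x (i + 1)) ∈ F}

/-- The shift map `σ_F^+` on `X_F^+`. -/
def shiftMap {X : Type*} (F : Set (X × X)) : MahavierSeq F → MahavierSeq F :=
  fun x => ⟨fun n => x.1 (n + 1), fun i => x.2 (i + 1)⟩

/-- With `f, g, α` as in the standing assumptions, for every `0 < β ≤ α`
and every `n`, the `n`-th iterated image of `[β,1]` under the set-valued map `f ∪ g`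
(given by `S ↦ f(S ∩ [0,a]) ∪ g(S)`) equals `[gⁿ(β), 1]`; in particular
`(f ∪ g)ⁿ([α,1]) = [gⁿ(α), 1]`. -/
theorem stmt12 (a b : ℝ) (f g : ℝ → ℝ) (ha0 : 0 < a) (ha1 : a < 1)
    (hfc : ContinuousOn f (Set.Icc 0 a)) (hfi : Set.InjOn f (Set.Icc 0 a))
    (hfm : Set.MapsTo f (Set.Icc 0 a) (Set.Icc 0 1))
    (hf0 : f 0 = 0) (hfa : f a = 1) (hfgt : ∀ x, 0 < x → x ≤ a → x < f x)
    (hb0 : 0 < b) (hb1 : b < 1)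
    (hgc : ContinuousOn g (Set.Icc 0 1)) (hgi : Set.InjOn g (Set.Icc 0 1))
    (hgm : Set.MapsTo g (Set.Icc 0 1) (Set.Icc 0 1))
    (hg0 : g 0 = 0) (hg1 : g 1 = b) (hglt : ∀ x, 0 < x → x ≤ 1 → g x < x)
    (α : ℝ) (hα : α ∈ Set.Icc 0 a) (hfα : f α = g 1) :
    ∀ β, 0 < β → β ≤ α → ∀ n : ℕ,
      (fun S : Set ℝ => f '' (S ∩ Set.Icc 0 a) ∪ g '' S)^[n] (Set.Icc β 1) =
        Set.Icc (g^[n] β) 1 := by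
  have hgsm : StrictMonoOn g (Icc 0 1) :=
    ContinuousOn.strictMonoOn_of_injOn_Icc zero_le_one (by rw [hg0, hg1]; exact hb0.le) hgc hgi
  have hfsm : StrictMonoOn f (Icc 0 a) :=
    ContinuousOn.strictMonoOn_of_injOn_Icc ha0.le (by rw [hf0, hfa]; exact zero_le_one) hfc hfi
  have hαa : α ≤ a := hα.2
  -- one step
  have step : ∀ β, 0 < β → β ≤ α →
      f '' (Icc β 1 ∩ Icc 0 a) ∪ g '' Icc β 1 = Icc (g β) 1 := by
    intro β hβ0 hβα
    have hβa : β ≤ a := hβα.trans hαa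
    have hβ1 : β ≤ 1 := hβa.trans ha1.le
    have hβmem : β ∈ Icc 0 a := ⟨hβ0.le, hβa⟩
    have hβmem1 : β ∈ Icc (0:ℝ) 1 := ⟨hβ0.le, hβ1⟩
    have hinter : Icc β 1 ∩ Icc 0 a = Icc β a := by
      rw [Icc_inter_Icc, max_eq_left hβ0.le, min_eq_right ha1.le]
    have hfimg : f '' Icc β a = Icc (f β) 1 := by
      apply Subset.antisymm
      · rintro _ ⟨x, hx, rfl⟩
        have hx' : x ∈ Icc 0 a := ⟨hβ0.le.trans hx.1, hx.2⟩
        constructor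
        · exact hfsm.monotoneOn hβmem hx' hx.1
        · rw [← hfa]; exact hfsm.monotoneOn hx' ⟨ha0.le, le_rfl⟩ hx.2
      · have := intermediate_value_Icc hβa (hfc.mono (Icc_subset_Icc hβ0.le le_rfl))
        rw [hfa] at this
        exact this
    have hgimg : g '' Icc β 1 = Icc (g β) b := by
      apply Subset.antisymm
      · rintro _ ⟨x, hx, rfl⟩
        have hx' : x ∈ Icc (0:ℝ) 1 := ⟨hβ0.le.trans hx.1, hx.2⟩
        constructor
        · exact hgsm.monotoneOn hβmem1 hx' hx.1
        · rw [← hg1]; exact hgsm.monotoneOn hx' ⟨zero_le_one, le_rfl⟩ hx.2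
      · have := intermediate_value_Icc hβ1 (hgc.mono (Icc_subset_Icc hβ0.le le_rfl))
        rw [hg1] at this
        exact this
    have hgβfβ : g β ≤ f β := ((hglt β hβ0 hβ1).trans (hfgt β hβ0 hβa)).le
    have hfβb : f β ≤ b := by
      rw [← hg1, ← hfα]
      exact hfsm.monotoneOn hβmem hα hβα
    rw [hinter, hfimg, hgimg]
    ext x
    simp only [mem_union, mem_Icc]
    constructor
    · rintro (⟨h1, h2⟩ | ⟨h1, h2⟩)
      · exact ⟨hgβfβ.trans h1, h2⟩
      · exact ⟨h1, h2.trans hb1.le⟩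
    · rintro ⟨h1, h2⟩
      rcases le_or_gt x b with h | h
      · exact Or.inr ⟨h1, h⟩
      · exact Or.inl ⟨hfβb.trans h.le, h2⟩
  -- invariant
  have inv : ∀ β, 0 < β → β ≤ α → ∀ n : ℕ, 0 < g^[n] β ∧ g^[n] β ≤ α := by
    intro β hβ0 hβα n
    induction n with
    | zero => exact ⟨hβ0, hβα⟩
    | succ n ih =>
      rw [Function.iterate_succ_apply']
      have h1 : g^[n] β ≤ 1 := (ih.2.trans hαa).trans ha1.le
      constructor
      · have := hgsm ⟨le_rfl, zero_le_one⟩ ⟨ih.1.le, h1⟩ ih.1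
        rwa [hg0] at this
      · exact ((hglt _ ih.1 h1).le).trans ih.2
  intro β hβ0 hβα n
  induction n with
  | zero => simp
  | succ n ih =>
    rw [Function.iterate_succ_apply', Function.iterate_succ_apply', ih]
    exact step _ (inv β hβ0 hβα n).1 (inv β hβ0 hβα n).2
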